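/- arXiv:0905.1710 — 3 statements merged into one kernel-verified Lean document; each statement's English description precedes it below -/
import Mathlib

section
/- Let Θ₁, Θ₂ be n×p complex matrices, D a positive definite p×p diagonal matrix, P a p×p orthogonal projection (diagonal with 0/1 entries) commuting with D, and β an n×n complex matrix. Set 𝒜 = i·diag(β*, β), Y = [[-Θ₁],[Θ₂]] D^{-1} P [Θ₂* Θ₁*], and J̃ = [[0,-I_n],[I_n,0]]. Then for every real y, the matrix H̃(y) := J̃* e^{-y𝒜} Y e^{y𝒜} satisfies H̃(y) = e^{y𝒜*} [[Θ₂],[Θ₁]] D^{-1} P [Θ₂* Θ₁*] e^{y𝒜}, and in particular H̃(y) is Hermitian and positive semidefinite. -/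
open Matrix
open scoped ComplexOrder

attribute [local instance] Matrix.normedAddCommGroup Matrix.normedSpace

theorem stmt_3 (n p : ℕ)
    (Θ₁ Θ₂ : Matrix (Fin n) (Fin p) ℂ)
    (d : Fin p → ℝ) (hd : ∀ i, 0 < d i)
    (D : Matrix (Fin p) (Fin p) ℂ) (hD : D = Matrix.diagonal (fun i => (d i : ℂ)))
    (q : Fin p → ℂ) (hq : ∀ i, q i = 0 ∨ q i = 1)
    (P : Matrix (Fin p) (Fin p) ℂ) (hP : P = Matrix.diagonal q)
    (β : Matrix (Fin n) (Fin n) ℂ)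
    (𝒜 : Matrix (Fin n ⊕ Fin n) (Fin n ⊕ Fin n) ℂ)
    (h𝒜 : 𝒜 = Complex.I • Matrix.fromBlocks βᴴ 0 0 β)
    (Y : Matrix (Fin n ⊕ Fin n) (Fin n ⊕ Fin n) ℂ)
    (hY : Y = Matrix.fromRows (-Θ₁) Θ₂ * D⁻¹ * P * Matrix.fromCols Θ₂ᴴ Θ₁ᴴ)
    (J : Matrix (Fin n ⊕ Fin n) (Fin n ⊕ Fin n) ℂ)
    (hJ : J = Matrix.fromBlocks 0 (-1) 1 0)
    (Htil : ℝ → Matrix (Fin n ⊕ Fin n) (Fin n ⊕ Fin n) ℂ)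
    (hH : ∀ y : ℝ, Htil y =
      Jᴴ * NormedSpace.exp ((-y) • 𝒜) * Y * NormedSpace.exp (y • 𝒜)) :
    ∀ y : ℝ,
      Htil y = NormedSpace.exp (y • 𝒜ᴴ) *
          (Matrix.fromRows Θ₂ Θ₁ * D⁻¹ * P * Matrix.fromCols Θ₂ᴴ Θ₁ᴴ) *
          NormedSpace.exp (y • 𝒜) ∧
        (Htil y).IsHermitian ∧ (Htil y).PosSemidef := by
  intro y
  -- J is unitary with inverse Jᴴ
  have hJH : Jᴴ = Matrix.fromBlocks 0 1 (-1) 0 := by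
    rw [hJ, Matrix.fromBlocks_conjTranspose]
    simp
  have hJJH : J * Jᴴ = 1 := by
    rw [hJH, hJ, Matrix.fromBlocks_multiply]
    simp [← Matrix.fromBlocks_one]
  have hJHJ : Jᴴ * J = 1 := by
    rw [hJH, hJ, Matrix.fromBlocks_multiply]
    simp [← Matrix.fromBlocks_one]
  -- conjugation relation
  have hconj : y • 𝒜ᴴ = Jᴴ * ((-y) • 𝒜) * J := by
    rw [hJH, h𝒜, hJ, Matrix.conjTranspose_smul, Matrix.fromBlocks_conjTranspose]
    simp only [mul_smul_comm, smul_mul_assoc]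
    rw [Matrix.fromBlocks_multiply, Matrix.fromBlocks_multiply]
    simp only [Matrix.conjTranspose_conjTranspose, Matrix.conjTranspose_zero,
      Matrix.mul_zero, Matrix.zero_mul, Matrix.one_mul, Matrix.mul_one,
      Matrix.neg_mul, Matrix.mul_neg, add_zero, zero_add, neg_neg, neg_zero]
    rw [Complex.star_def, Complex.conj_I]
    simp [neg_smul, smul_neg]
  -- helper unit
  set u : (Matrix (Fin n ⊕ Fin n) (Fin n ⊕ Fin n) ℂ)ˣ :=
    ⟨J, Jᴴ, hJJH, hJHJ⟩ with hu
  have hexpconj : NormedSpace.exp (y • 𝒜ᴴ) =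
      Jᴴ * NormedSpace.exp ((-y) • 𝒜) * J := by
    rw [hconj]
    have := Matrix.exp_units_conj' u ((-y) • 𝒜)
    simpa [hu] using this
  have hJHY : Jᴴ * Y =
      Matrix.fromRows Θ₂ Θ₁ * D⁻¹ * P * Matrix.fromCols Θ₂ᴴ Θ₁ᴴ := by
    have key : (Matrix.fromBlocks (0 : Matrix (Fin n) (Fin n) ℂ) 1 (-1) 0 :
        Matrix (Fin n ⊕ Fin n) (Fin n ⊕ Fin n) ℂ) *
        (Matrix.fromRows (-Θ₁) Θ₂ : Matrix (Fin n ⊕ Fin n) (Fin p) ℂ) = Matrix.fromRows Θ₂ Θ₁ := by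
      rw [Matrix.fromBlocks_mul_fromRows]
      simp
    rw [hY, hJH, ← Matrix.mul_assoc, ← Matrix.mul_assoc, ← Matrix.mul_assoc, key]
  have hmain : Htil y = NormedSpace.exp (y • 𝒜ᴴ) *
      (Matrix.fromRows Θ₂ Θ₁ * D⁻¹ * P * Matrix.fromCols Θ₂ᴴ Θ₁ᴴ) *
      NormedSpace.exp (y • 𝒜) := by
    rw [hH y, hexpconj, ← hJHY]
    have h1 : Jᴴ * NormedSpace.exp ((-y) • 𝒜) * J * (Jᴴ * Y) =
        Jᴴ * NormedSpace.exp ((-y) • 𝒜) * (J * Jᴴ) * Y := by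
      simp only [Matrix.mul_assoc]
    rw [h1, hJJH, Matrix.mul_one]
  -- positive semidefiniteness
  have hsmulH : y • 𝒜ᴴ = (y • 𝒜)ᴴ := by
    rw [Matrix.conjTranspose_smul, star_trivial]
  have hexpH : NormedSpace.exp (y • 𝒜ᴴ) = (NormedSpace.exp (y • 𝒜))ᴴ := by
    rw [hsmulH, Matrix.exp_conjTranspose]
  have hDinv : D⁻¹ = Matrix.diagonal (fun i => ((d i : ℂ))⁻¹) := by
    rw [hD]
    apply Matrix.inv_eq_left_inv
    have h1 : (fun i => ((d i : ℂ))⁻¹ * (d i : ℂ)) = fun _ => 1 := by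
      funext i
      exact inv_mul_cancel₀ (Complex.ofReal_ne_zero.mpr (hd i).ne')
    rw [Matrix.diagonal_mul_diagonal, h1, Matrix.diagonal_one]
  have hdiag : D⁻¹ * P = Matrix.diagonal (fun i => ((d i : ℂ))⁻¹ * q i) := by
    rw [hDinv, hP, Matrix.diagonal_mul_diagonal]
  have hdpsd : (Matrix.diagonal (fun i => ((d i : ℂ))⁻¹ * q i)).PosSemidef := by
    rw [Matrix.posSemidef_diagonal_iff]
    intro i
    rcases hq i with h | h
    · simp [h]
    · rw [h, mul_one, ← Complex.ofReal_inv]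
      exact_mod_cast (inv_nonneg.mpr (hd i).le)
  have hM : (Matrix.fromRows Θ₂ Θ₁ * D⁻¹ * P * Matrix.fromCols Θ₂ᴴ Θ₁ᴴ).PosSemidef := by
    have h2 := hdpsd.mul_mul_conjTranspose_same (Matrix.fromRows Θ₂ Θ₁)
    rw [Matrix.conjTranspose_fromRows_eq_fromCols_conjTranspose] at h2
    have h3 : Matrix.fromRows Θ₂ Θ₁ * D⁻¹ * P * Matrix.fromCols Θ₂ᴴ Θ₁ᴴ =
        Matrix.fromRows Θ₂ Θ₁ * Matrix.diagonal (fun i => ((d i : ℂ))⁻¹ * q i) *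
          Matrix.fromCols Θ₂ᴴ Θ₁ᴴ := by
      rw [← hdiag]
      simp only [Matrix.mul_assoc]
    rw [h3]
    exact h2
  have hpsd : (Htil y).PosSemidef := by
    rw [hmain, hexpH]
    exact hM.conjTranspose_mul_mul_same (NormedSpace.exp (y • 𝒜))
  exact ⟨hmain, hpsd.isHermitian, hpsd⟩
end

section
/- Let γ be a p×2p complex matrix with γ J γ* = D where D is positive definite and J = [[0,I_p],[I_p,0]]. Let X be a p×2p matrix of rank p with X J γ* = 0. Then X J X* is negative definite. -/
open Matrix
open scoped ComplexOrder

private lemma dot_helper {m n : Type*} [Fintype m] [Fintype n]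
    (M : Matrix n m ℂ) (N : Matrix n n ℂ) (a : m → ℂ) (b : n → ℂ) :
    star (M *ᵥ a) ⬝ᵥ (N *ᵥ b) = star a ⬝ᵥ ((Mᴴ * N) *ᵥ b) := by
  rw [star_mulVec, dotProduct_mulVec, vecMul_vecMul, ← dotProduct_mulVec]

/-- The linear map `x ↦ (x, -x)`, whose range is a `J`-negative subspace. -/
private def negDiag (p : ℕ) : (Fin p → ℂ) →ₗ[ℂ] ((Fin p ⊕ Fin p) → ℂ) where
  toFun x := Sum.elim x (-x)
  map_add' x y := by funext i; cases i <;> simp <;> ring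
  map_smul' r x := by funext i; cases i <;> simp

theorem stmt_8 (p : ℕ)
    (J : Matrix (Fin p ⊕ Fin p) (Fin p ⊕ Fin p) ℂ)
    (hJ : J = Matrix.fromBlocks 0 1 1 0)
    (γ X : Matrix (Fin p) (Fin p ⊕ Fin p) ℂ)
    (D : Matrix (Fin p) (Fin p) ℂ) (hD : D.PosDef)
    (hγ : γ * J * γᴴ = D)
    (hrank : X.rank = p)
    (hX : X * J * γᴴ = 0) :
    (-(X * J * Xᴴ)).PosDef := by
  have hJH : Jᴴ = J := by
    subst hJ
    ext i j
    cases i <;> cases j <;> simp [fromBlocks, conjTranspose_apply, one_apply, eq_comm]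
  have hγJX : γ * J * Xᴴ = 0 := by
    have h := congrArg conjTranspose hX
    simpa [conjTranspose_mul, hJH, Matrix.mul_assoc] using h
  have hS : (X * J * Xᴴ).IsHermitian := by
    simp [Matrix.IsHermitian, conjTranspose_mul, hJH, Matrix.mul_assoc]
  refine Matrix.posDef_iff_dotProduct_mulVec.mpr ⟨hS.neg, ?_⟩
  intro v hv
  -- the rank of γ is p
  have hrγ : γ.rank = p := by
    have h1 : γ.rank ≤ p := by
      simpa using γ.rank_le_card_height
    have h2 : D.rank = p := by
      simpa using Matrix.rank_of_isUnit D hD.isUnit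
    have h3 : D.rank ≤ γ.rank := by
      rw [← hγ]
      exact le_trans (Matrix.rank_mul_le_left _ _) (Matrix.rank_mul_le_left _ _)
    omega
  -- Xᴴ has trivial kernel
  have hXrank : (Xᴴ).rank = p := by rw [X.rank_conjTranspose, hrank]
  have hkerX : LinearMap.ker (Xᴴ).mulVecLin = ⊥ := by
    have h1 := LinearMap.finrank_range_add_finrank_ker (Xᴴ).mulVecLin
    have h2 : Module.finrank ℂ (LinearMap.range (Xᴴ).mulVecLin) = p := hXrank
    rw [h2, Module.finrank_fin_fun] at h1
    have h3 : Module.finrank ℂ (LinearMap.ker (Xᴴ).mulVecLin) = 0 := by omega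
    exact Submodule.finrank_eq_zero.mp h3
  set w : (Fin p ⊕ Fin p) → ℂ := Xᴴ *ᵥ v with hwdef
  have hw0 : w ≠ 0 := by
    intro h
    apply hv
    have : v ∈ LinearMap.ker (Xᴴ).mulVecLin := by
      simpa [Matrix.mulVecLin_apply] using h
    simpa [hkerX] using this
  have hw2 : γ *ᵥ (J *ᵥ w) = 0 := by
    rw [hwdef, mulVec_mulVec, mulVec_mulVec, hγJX, zero_mulVec]
  set c : ℂ := star w ⬝ᵥ (J *ᵥ w) with hcdef
  have hgoal : star v ⬝ᵥ ((-(X * J * Xᴴ)) *ᵥ v) = -c := by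
    rw [neg_mulVec, dotProduct_neg, hcdef, hwdef, dot_helper, conjTranspose_conjTranspose,
      mulVec_mulVec, Matrix.mul_assoc]
  rw [hgoal]
  -- c is real
  have hcreal : star c = c := by
    have h1 : c = star (star (J *ᵥ w) ⬝ᵥ w) := hcdef.trans (star_dotProduct _ _)
    have h2 : star (J *ᵥ w) ⬝ᵥ w = c := by
      rw [star_mulVec, hJH, ← dotProduct_mulVec, ← hcdef]
    calc star c = star (J *ᵥ w) ⬝ᵥ w := by rw [h1, star_star]
      _ = c := h2
  have hcim : c.im = 0 := by
    have h3 := congrArg Complex.im hcreal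
    simp only [Complex.star_def, Complex.conj_im] at h3
    linarith
  by_contra hcon
  have hc : 0 ≤ c := by
    rw [Complex.le_def]
    refine ⟨?_, by simp [hcim]⟩
    by_contra hre
    exact hcon (Complex.lt_def.mpr ⟨by simpa using lt_of_not_ge hre, by simp [hcim]⟩)
  -- quadratic form values
  have e1 : ∀ a : Fin p → ℂ, star (γᴴ *ᵥ a) ⬝ᵥ (J *ᵥ (γᴴ *ᵥ a)) = star a ⬝ᵥ (D *ᵥ a) := by
    intro a
    rw [dot_helper, conjTranspose_conjTranspose, mulVec_mulVec, hγ]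
  have e2 : ∀ a : Fin p → ℂ, star (γᴴ *ᵥ a) ⬝ᵥ (J *ᵥ w) = 0 := by
    intro a
    rw [dot_helper, conjTranspose_conjTranspose, ← mulVec_mulVec, hw2, dotProduct_zero]
  have e3 : ∀ a : Fin p → ℂ, star w ⬝ᵥ (J *ᵥ (γᴴ *ᵥ a)) = 0 := by
    intro a
    have h6 : (γ * J) *ᵥ w = 0 := by rw [← mulVec_mulVec, hw2]
    have h7 : star w ᵥ* (J * γᴴ) = 0 := by
      have h8 := Matrix.star_mulVec (γ * J) w
      rw [h6, star_zero, conjTranspose_mul, hJH] at h8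
      exact h8.symm
    rw [mulVec_mulVec, dotProduct_mulVec, h7, zero_dotProduct]
  -- the quadratic form is nonnegative on (range γᴴ) + span {w}
  have key : ∀ (a : Fin p → ℂ) (t : ℂ),
      0 ≤ star (γᴴ *ᵥ a + t • w) ⬝ᵥ (J *ᵥ (γᴴ *ᵥ a + t • w)) := by
    intro a t
    have expand : star (γᴴ *ᵥ a + t • w) ⬝ᵥ (J *ᵥ (γᴴ *ᵥ a + t • w))
        = star a ⬝ᵥ (D *ᵥ a) + (star t * t) * c := by
      simp only [star_add, mulVec_add, add_dotProduct, dotProduct_add, star_smul,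
        smul_dotProduct, dotProduct_smul, mulVec_smul, e1, e2, e3, smul_zero,
        smul_eq_mul, add_zero, zero_add, mul_zero]
      rw [← hcdef]
      ring
    rw [expand]
    exact add_nonneg ((Matrix.posSemidef_iff_dotProduct_mulVec.mp hD.posSemidef).2 a) (mul_nonneg (star_mul_self_nonneg t) hc)
  by_cases hmem : w ∈ LinearMap.range γᴴ.mulVecLin
  · -- then w = γᴴ a with a ≠ 0, and c = aᴴ D a > 0, but also c = 0
    obtain ⟨a, ha⟩ := hmem
    rw [Matrix.mulVecLin_apply] at ha
    have ha0 : a ≠ 0 := by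
      rintro rfl
      rw [mulVec_zero] at ha
      exact hw0 ha.symm
    have hc0 : c = 0 := by
      have h9 := e2 a
      rw [ha] at h9
      rw [hcdef]
      exact h9
    have h2 := e1 a
    rw [ha] at h2
    have hpos := (Matrix.posDef_iff_dotProduct_mulVec.mp hD).2 ha0
    rw [← h2, ← hcdef] at hpos
    exact hpos.ne' hc0
  · -- dimension argument
    set R : Submodule ℂ ((Fin p ⊕ Fin p) → ℂ) := LinearMap.range γᴴ.mulVecLin with hRdef
    set W : Submodule ℂ ((Fin p ⊕ Fin p) → ℂ) := R ⊔ (ℂ ∙ w) with hWdef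
    have hRfin : Module.finrank ℂ R = p := by
      have : (γᴴ).rank = p := by rw [γ.rank_conjTranspose, hrγ]
      exact this
    have hwW : w ∈ W := Submodule.mem_sup_right (Submodule.mem_span_singleton_self w)
    have hlt : R < W := lt_of_le_of_ne le_sup_left (by
      intro h
      exact hmem (h ▸ hwW))
    have hWge : p + 1 ≤ Module.finrank ℂ W := by
      have := Submodule.finrank_lt_finrank_of_lt hlt
      omega
    set N : Submodule ℂ ((Fin p ⊕ Fin p) → ℂ) := LinearMap.range (negDiag p) with hNdef
    have hNfin : Module.finrank ℂ N = p := by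
      rw [hNdef, LinearMap.finrank_range_of_inj, Module.finrank_fin_fun]
      intro x y h
      funext i
      have := congrFun h (Sum.inl i)
      simpa [negDiag] using this
    have hinf : 0 < Module.finrank ℂ (W ⊓ N : Submodule ℂ ((Fin p ⊕ Fin p) → ℂ)) := by
      have hsum := Submodule.finrank_sup_add_finrank_inf_eq W N
      have hle : Module.finrank ℂ (W ⊔ N : Submodule ℂ ((Fin p ⊕ Fin p) → ℂ)) ≤ p + p := by
        have h1 := Submodule.finrank_le (W ⊔ N)
        have h2 : Module.finrank ℂ ((Fin p ⊕ Fin p) → ℂ) = p + p := by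
          rw [Module.finrank_pi]
          simp
        omega
      omega
    obtain ⟨⟨u, humem⟩, hune⟩ := Module.finrank_pos_iff_exists_ne_zero.mp hinf
    have hu0 : u ≠ 0 := fun h => hune (Subtype.ext h)
    obtain ⟨x, hx⟩ := humem.2
    have hx' : Sum.elim x (-x) = u := hx
    have hx0 : x ≠ 0 := by
      rintro rfl
      apply hu0
      rw [← hx']
      simp
    -- the form is negative at u
    have hneg : star u ⬝ᵥ (J *ᵥ u) < 0 := by
      have hJu : J *ᵥ u = Sum.elim (-x) x := by
        rw [hJ, ← hx', fromBlocks_mulVec]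
        funext i
        cases i <;> simp
      have hsu : star u = Sum.elim (star x) (star (-x)) := by
        rw [← hx']
        funext i
        cases i <;> simp
      rw [hJu, hsu, sumElim_dotProduct_sumElim]
      have hxpos : 0 < star x ⬝ᵥ x := dotProduct_star_self_pos_iff.mpr hx0
      have : star x ⬝ᵥ (-x) + star (-x) ⬝ᵥ x = -(star x ⬝ᵥ x + star x ⬝ᵥ x) := by
        rw [dotProduct_neg, star_neg, neg_dotProduct]
        ring
      rw [this]
      exact neg_neg_of_pos (add_pos hxpos hxpos)
    -- but the form is nonnegative at u since u ∈ W
    obtain ⟨y, hy, z, hz, hyz⟩ := Submodule.mem_sup.mp humem.1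
    obtain ⟨a, ha⟩ := hy
    obtain ⟨t, ht⟩ := Submodule.mem_span_singleton.mp hz
    have hu_eq : u = γᴴ *ᵥ a + t • w := by
      rw [← hyz, ← ht, ← ha, Matrix.mulVecLin_apply]
    have hnonneg : 0 ≤ star u ⬝ᵥ (J *ᵥ u) := by
      rw [hu_eq]
      exact key a t
    exact hneg.not_ge hnonneg
end

section
/- Let γ, X̃ be p×2p complex matrices with γ J γ* = D (D > 0 diagonal), X̃ J X̃* = -I_p, X̃ J γ* = 0, and J = [[0,I_p],[I_p,0]]. Define L = [[D^{-1/2}γ],[X̃]] (2p×2p). Then L is invertible with L^{-1} = [J γ* D^{-1/2}, -J X̃*], and L^{-1} H₀ L = J γ* γ, where H₀ = [[D,0],[0,0]]. In particular, J γ* γ is similar to J H₀. -/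
open Matrix
open scoped ComplexOrder

theorem stmt_9 (p : ℕ)
    (J : Matrix (Fin p ⊕ Fin p) (Fin p ⊕ Fin p) ℂ)
    (hJ : J = Matrix.fromBlocks 0 1 1 0)
    (γ Xt : Matrix (Fin p) (Fin p ⊕ Fin p) ℂ)
    (D E : Matrix (Fin p) (Fin p) ℂ) (hD : D.PosDef) (hE : E.PosDef)
    (hED : E * E = D)
    (hγ : γ * J * γᴴ = D)
    (hXt : Xt * J * Xtᴴ = -1)
    (hXγ : Xt * J * γᴴ = 0)
    (L M H₀ : Matrix (Fin p ⊕ Fin p) (Fin p ⊕ Fin p) ℂ)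
    (hL : L = Matrix.fromRows (E⁻¹ * γ) Xt)
    (hM : M = Matrix.fromCols (J * γᴴ * E⁻¹) (-(J * Xtᴴ)))
    (hH₀ : H₀ = Matrix.fromBlocks D 0 0 0) :
    L * M = 1 ∧ M * L = 1 ∧ L⁻¹ = M ∧ L⁻¹ * H₀ * L = J * γᴴ * γ := by
  have hEu : IsUnit E.det := isUnit_iff_isUnit_det E |>.1 hE.isUnit
  have hEinv : E⁻¹ * E = 1 := nonsing_inv_mul E hEu
  have hinvE : E * E⁻¹ = 1 := mul_nonsing_inv E hEu
  have hJH : Jᴴ = J := by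
    rw [hJ]; simp [Matrix.fromBlocks_conjTranspose]
  have hγX : γ * J * Xtᴴ = 0 := by
    have := congrArg conjTranspose hXγ
    simpa [Matrix.mul_assoc, hJH] using this
  -- key block products
  have k1 : (E⁻¹ * γ) * (J * γᴴ * E⁻¹) = 1 := by
    have : E⁻¹ * (γ * J * γᴴ) * E⁻¹ = 1 := by
      rw [hγ, ← hED, ← Matrix.mul_assoc, hEinv, Matrix.one_mul, hinvE]
    calc (E⁻¹ * γ) * (J * γᴴ * E⁻¹) = E⁻¹ * (γ * J * γᴴ) * E⁻¹ := by
          simp only [Matrix.mul_assoc]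
      _ = 1 := this
  have k2 : (E⁻¹ * γ) * (-(J * Xtᴴ)) = 0 := by
    have : E⁻¹ * (γ * J * Xtᴴ) = 0 := by rw [hγX, Matrix.mul_zero]
    simp only [Matrix.mul_neg, Matrix.mul_assoc] at this ⊢
    rw [this, neg_zero]
  have k3 : Xt * (J * γᴴ * E⁻¹) = 0 := by
    calc Xt * (J * γᴴ * E⁻¹) = (Xt * J * γᴴ) * E⁻¹ := by simp only [Matrix.mul_assoc]
      _ = 0 := by rw [hXγ, Matrix.zero_mul]
  have k4 : Xt * (-(J * Xtᴴ)) = 1 := by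
    have : Xt * J * Xtᴴ = -1 := hXt
    simp only [Matrix.mul_neg, Matrix.mul_assoc] at this ⊢
    rw [this]; simp
  have hLM : L * M = 1 := by
    rw [hL, hM, fromRows_mul_fromCols, k1, k2, k3, k4]
    simp [← fromBlocks_one]
  have hML : M * L = 1 := mul_eq_one_comm.mp hLM
  have hLinv : L⁻¹ = M := inv_eq_right_inv hLM
  refine ⟨hLM, hML, hLinv, ?_⟩
  rw [hLinv, hM, hH₀, fromCols_mul_fromBlocks, hL, fromCols_mul_fromRows]
  have : J * γᴴ * E⁻¹ * D * (E⁻¹ * γ) = J * γᴴ * γ := by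
    rw [← hED]
    calc J * γᴴ * E⁻¹ * (E * E) * (E⁻¹ * γ)
        = J * γᴴ * ((E⁻¹ * E) * (E * E⁻¹)) * γ := by simp only [Matrix.mul_assoc]
      _ = J * γᴴ * γ := by rw [hEinv, hinvE, Matrix.mul_one, Matrix.mul_one]
  simp only [Matrix.mul_zero, Matrix.zero_mul, Matrix.neg_mul, Matrix.mul_neg, add_zero,
    neg_zero, Matrix.mul_assoc] at this ⊢
  rw [this]
end
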